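/- Let G be a group, κ : G → G a group automorphism with κ ∘ κ = id_G, and δ : G → G a map with κ ∘ δ = δ ∘ κ satisfying δ(x)δ(y) = δ(y)δ(x δ(y)) for all x, y ∈ G. Assume Im(δ) is a subgroup of G and that the fibers δ⁻¹(d), for d ∈ Im(δ), are pairwise equinumerous. Define x ◁ y = κ(x)δ(y) and Tw^k(x) = x δ(x)^{−k}. Then for any positive integers n, m, the set { (a, b) ∈ G × G : κ(a ◁ b) = Twⁿ(a) and κ(b ◁ a) = Tw^m(b) } is in bijection with { a ∈ G : δ(a)^{nm−1} = 1 } × δ⁻¹({1}). -/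

import Mathlib

/-- With `x ◁ y = κ(x)δ(y)` and `Tw^k(x) = x δ(x)^{−k}`, under the
hypotheses of Lemma 5.1 (key identity, image a subgroup, equinumerous fibers), for
positive integers `n, m` the set of colorings of the Hopf link with framings `(n,m)`,
`{ (a,b) : κ(a ◁ b) = Twⁿ(a), κ(b ◁ a) = Tw^m(b) }`, is in bijection with
`{ a : δ(a)^{nm−1} = 1 } × δ⁻¹(1)`. -/
theorem stmt_13 {G : Type*} [Group G] (κ : G →* G) (hκ : ∀ x, κ (κ x) = x)
    (δ : G → G) (hcomm : ∀ x, κ (δ x) = δ (κ x))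
    (hkey : ∀ x y : G, δ x * δ y = δ y * δ (x * δ y))
    (hsub : ∃ H : Subgroup G, (H : Set G) = Set.range δ)
    (hfib : ∀ d e : G, d ∈ Set.range δ → e ∈ Set.range δ →
      Nonempty ((δ ⁻¹' {d}) ≃ (δ ⁻¹' {e})))
    (n m : ℕ) (hn : 0 < n) (hm : 0 < m) :
    Nonempty
      ({p : G × G |
          κ (κ p.1 * δ p.2) = p.1 * (δ p.1) ^ (-(n : ℤ)) ∧
          κ (κ p.2 * δ p.1) = p.2 * (δ p.2) ^ (-(m : ℤ))}
        ≃ ({a : G | (δ a) ^ (n * m - 1) = 1} × (δ ⁻¹' {1}))) := by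
  classical
  obtain ⟨H, hH⟩ := hsub
  set k := n * m with hk
  have hk1 : 1 ≤ k := Nat.one_le_iff_ne_zero.mpr (Nat.mul_ne_zero hn.ne' hm.ne')
  set c : G → G := fun a => κ (δ a) ^ (-(n : ℤ)) with hc
  have hinj : Function.Injective κ := Function.LeftInverse.injective hκ
  have hcr : ∀ a, c a ∈ Set.range δ := by
    intro a
    have h1 : κ (δ a) ∈ H := by
      rw [← SetLike.mem_coe, hH]
      exact ⟨κ a, (hcomm a).symm⟩
    rw [← hH]
    exact SetLike.mem_coe.mpr (H.zpow_mem h1 _)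
  have h1r : (1 : G) ∈ Set.range δ := by rw [← hH]; exact H.one_mem
  have e : ∀ a : G, (δ ⁻¹' {c a}) ≃ (δ ⁻¹' {(1 : G)}) := fun a =>
    Classical.choice (hfib _ _ (hcr a) h1r)
  have hcast : (n : ℤ) * (m : ℤ) = ((k : ℕ) : ℤ) := by rw [hk]; push_cast; ring
  have key : ∀ x : G, x = (x ^ (-(n : ℤ))) ^ (-(m : ℤ)) ↔ x ^ (k - 1) = 1 := by
    intro x
    rw [← zpow_mul, neg_mul_neg, hcast, zpow_natCast, eq_comm]
    conv_lhs => rw [show k = (k - 1) + 1 by omega]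
    rw [pow_succ, mul_eq_right]
  have main : ∀ a b : G,
      (κ (κ a * δ b) = a * (δ a) ^ (-(n : ℤ)) ∧
       κ (κ b * δ a) = b * (δ b) ^ (-(m : ℤ)))
      ↔ ((δ a) ^ (k - 1) = 1 ∧ δ b = c a) := by
    intro a b
    have c1 : κ (κ a * δ b) = a * (δ a) ^ (-(n : ℤ)) ↔ δ b = c a := by
      rw [map_mul, hκ, mul_right_inj]
      constructor
      · intro h
        have h2 := congrArg κ h
        rw [hκ, map_zpow] at h2
        exact h2
      · intro h
        rw [h, hc]
        simp only [← map_zpow, hκ]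
    have c2 : κ (κ b * δ a) = b * (δ b) ^ (-(m : ℤ)) ↔ κ (δ a) = (δ b) ^ (-(m : ℤ)) := by
      rw [map_mul, hκ, mul_right_inj]
    have htrans : (δ a) ^ (k - 1) = 1 ↔ κ (δ a) ^ (k - 1) = 1 := by
      constructor
      · intro h; rw [← map_pow, h, map_one]
      · intro h; apply hinj; rw [map_pow, h, map_one]
    constructor
    · rintro ⟨h1, h2⟩
      have hb := c1.mp h1
      have h3 := c2.mp h2
      rw [hb, hc] at h3
      exact ⟨htrans.mpr ((key _).mp h3), hb⟩
    · rintro ⟨hP, hb⟩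
      refine ⟨c1.mpr hb, c2.mpr ?_⟩
      rw [hb, hc]
      exact (key _).mpr (htrans.mp hP)
  refine ⟨⟨fun p => (⟨p.1.1, ((main p.1.1 p.1.2).mp p.2).1⟩,
      e p.1.1 ⟨p.1.2, ((main p.1.1 p.1.2).mp p.2).2⟩),
    fun q => ⟨(q.1.1, ((e q.1.1).symm q.2).1),
      (main q.1.1 ((e q.1.1).symm q.2).1).mpr ⟨q.1.2, ((e q.1.1).symm q.2).2⟩⟩,
    ?_, ?_⟩⟩
  · intro p
    apply Subtype.ext
    refine Prod.ext_iff.mpr ⟨rfl, ?_⟩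
    exact congrArg Subtype.val ((e (p : G × G).1).symm_apply_apply _)
  · intro q
    refine Prod.ext_iff.mpr ⟨Subtype.ext rfl, ?_⟩
    exact (e q.1.1).apply_symm_apply q.2
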